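/- Let X be a ball Banach function space on ℝⁿ such that the Hardy–Littlewood maximal operator M satisfies the weak-type bound ‖χ_{{Mf > λ}}‖_X ≤ C λ⁻¹ ‖f‖_X for all f ∈ X and λ > 0. Then there exists a constant C' > 0 such that for every ball B ⊂ ℝⁿ, ‖χ_B‖_X · ‖χ_B‖_{X'} ≤ C' |B|, where X' is the associate space of X. -/

import Mathlib

open MeasureTheory ENNReal Filter

noncomputable section

abbrev En (n : ℕ) := EuclideanSpace ℝ (Fin n)

/-- A ball Banach function space on ℝⁿ, encoded by its (extended-real-valued) norm
functional on real-valued functions. -/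
structure BallBanach (n : ℕ) where
  N : (En n → ℝ) → ℝ≥0∞
  eq_zero : ∀ f : En n → ℝ, N f = 0 → f =ᵐ[volume] 0
  mono : ∀ f g : En n → ℝ, (∀ᵐ x ∂volume, |g x| ≤ |f x|) → N g ≤ N f
  add_le : ∀ f g : En n → ℝ, N (f + g) ≤ N f + N g
  fatou : ∀ (f : ℕ → En n → ℝ) (g : En n → ℝ),
    (∀ᵐ x ∂volume, ∀ m, 0 ≤ f m x) →
    (∀ᵐ x ∂volume, Monotone fun m => f m x) →
    (∀ᵐ x ∂volume, Tendsto (fun m => f m x) atTop (nhds (g x))) →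
    Tendsto (fun m => N (f m)) atTop (nhds (N g))
  ball_fin : ∀ (x : En n) (r : ℝ), 0 < r → N ((Metric.ball x r).indicator fun _ => 1) < ⊤
  loc : ∀ (x : En n) (r : ℝ), 0 < r → ∃ C : ℝ≥0∞, C < ⊤ ∧ ∀ f : En n → ℝ,
    (∫⁻ y in Metric.ball x r, ENNReal.ofReal |f y|) ≤ C * N f

/-- The associate (Köthe dual) norm of a ball Banach function space. -/
def BallBanach.dual {n : ℕ} (b : BallBanach n) (g : En n → ℝ) : ℝ≥0∞ :=
  ⨆ (f : En n → ℝ) (_ : b.N f ≤ 1), ∫⁻ x, ENNReal.ofReal |f x * g x|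

/-- The Hardy–Littlewood maximal function. -/
def maximal {n : ℕ} (f : En n → ℝ) (x : En n) : ℝ≥0∞ :=
  ⨆ (r : ℝ) (_ : 0 < r),
    (volume (Metric.ball x r))⁻¹ * ∫⁻ y in Metric.ball x r, ENNReal.ofReal |f y|

/-- The dyadic annulus `D_k = {x : 2^(k-1) < |x| ≤ 2^k}`. -/
def annulus (n : ℕ) (k : ℤ) : Set (En n) := {x | (2:ℝ)^(k-1) < ‖x‖ ∧ ‖x‖ ≤ (2:ℝ)^k}

/-- The Herz-type norm associated with a ball Banach function space. -/
def herzNorm {n : ℕ} (b : BallBanach n) (α q : ℝ) (g : En n → ℝ) : ℝ≥0∞ :=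
  (∑' k : ℤ, (2:ℝ≥0∞) ^ ((k:ℝ) * α * q) * b.N ((annulus n k).indicator g) ^ q) ^ (1/q)

/-- A central `(X, α, s)`-atom supported in the closed ball `B(0,r)`. -/
def IsCentralAtom {n : ℕ} (b : BallBanach n) (α : ℝ) (s : ℕ) (a : En n → ℝ) (r : ℝ) : Prop :=
  Measurable a ∧ (∀ x, x ∉ Metric.closedBall (0 : En n) r → a x = 0) ∧
  b.N a ≤ (volume (Metric.closedBall (0 : En n) r)) ^ (-(α / (n:ℝ))) ∧
  ∀ β : Fin n → ℕ, (∑ i, β i) ≤ s → ∫ x, a x * ∏ i, (x i) ^ (β i) = 0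

/-- The non-tangential grand maximal function `M_N f`. -/
def grandMaximal (n NN : ℕ) (f : En n → ℝ) (x : En n) : ℝ≥0∞ :=
  ⨆ (φ : SchwartzMap (En n) ℝ)
    (_ : ∀ k m : ℕ, k ≤ NN → m ≤ NN → SchwartzMap.seminorm ℝ k m φ ≤ 1)
    (y : En n) (t : ℝ) (_ : 0 < t) (_ : dist y x < t),
    ENNReal.ofReal |∫ z, f z * ((t ^ n)⁻¹ * φ (t⁻¹ • (y - z)))|

/-- if the Hardy–Littlewood maximal operator is weakly bounded on `X`,
then `‖χ_B‖_X ‖χ_B‖_{X'} ≤ C' |B|` for every ball `B`. -/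
theorem stmt1 {n : ℕ} (b : BallBanach n)
    (hweak : ∃ C : ℝ≥0∞, C < ⊤ ∧ ∀ (f : En n → ℝ) (lam : ℝ), 0 < lam →
      b.N ({x | ENNReal.ofReal lam < maximal f x}.indicator fun _ => 1) ≤
        C * (ENNReal.ofReal lam)⁻¹ * b.N f) :
    ∃ C' : ℝ≥0∞, 0 < C' ∧ C' < ⊤ ∧ ∀ (x : En n) (r : ℝ), 0 < r →
      b.N ((Metric.ball x r).indicator fun _ => 1) *
        b.dual ((Metric.ball x r).indicator fun _ => 1) ≤ C' * volume (Metric.ball x r) := by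
  obtain ⟨C, hCtop, hCw⟩ := hweak
  refine ⟨2 * ENNReal.ofReal (2 ^ n) * C + 1, ?_, ?_, ?_⟩
  · exact lt_of_lt_of_le zero_lt_one le_add_self
  · refine ENNReal.add_lt_top.2 ⟨?_, ENNReal.one_lt_top⟩
    exact ENNReal.mul_lt_top (ENNReal.mul_lt_top (by norm_num) ENNReal.ofReal_lt_top) hCtop
  · intro x r hr
    have hV0 : volume (Metric.ball x r) ≠ 0 := (Metric.measure_ball_pos volume x hr).ne'
    have hVt : volume (Metric.ball x r) ≠ ⊤ := measure_ball_lt_top.ne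
    set V : ℝ≥0∞ := volume (Metric.ball x r) with hV
    set W : ℝ≥0∞ := ENNReal.ofReal (2 ^ n) * V with hWdef
    have h2n0 : ENNReal.ofReal ((2:ℝ) ^ n) ≠ 0 := (ENNReal.ofReal_pos.mpr (by positivity)).ne'
    have hW0 : W ≠ 0 := mul_ne_zero h2n0 hV0
    have hWt : W ≠ ⊤ := ENNReal.mul_ne_top ENNReal.ofReal_ne_top hVt
    set B := Metric.ball x r with hBdef
    have key : ∀ f : En n → ℝ, b.N f ≤ 1 →
        (∫⁻ y in B, ENNReal.ofReal |f y|) * b.N (B.indicator fun _ => 1) ≤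
          2 * ENNReal.ofReal (2 ^ n) * C * V := by
      intro f hf
      set I := ∫⁻ y in B, ENNReal.ofReal |f y| with hIdef
      obtain ⟨Cl, hClt, hloc⟩ := b.loc x r hr
      have hIt : I ≠ ⊤ := by
        refine ne_top_of_le_ne_top hClt.ne ?_
        calc I ≤ Cl * b.N f := hloc f
          _ ≤ Cl * 1 := mul_le_mul_right hf _
          _ = Cl := mul_one _
      by_cases hI0 : I = 0
      · simp [hI0]
      set a : ℝ≥0∞ := I / W with ha
      have ha0 : a ≠ 0 := by
        simp only [ha, ne_eq, ENNReal.div_eq_zero_iff, not_or]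
        exact ⟨hI0, hWt⟩
      have hat : a ≠ ⊤ := (ENNReal.div_lt_top hIt hW0).ne
      set lam := a.toReal / 2 with hlam
      have hlam0 : 0 < lam := by
        have := ENNReal.toReal_pos ha0 hat
        positivity
      have hofR : ENNReal.ofReal lam = a / 2 := by
        rw [hlam, ENNReal.ofReal_div_of_pos two_pos, ENNReal.ofReal_toReal hat]
        norm_num
      have hhalf0 : a / 2 ≠ 0 := by
        simp only [ne_eq, ENNReal.div_eq_zero_iff, not_or]
        exact ⟨ha0, ENNReal.ofNat_ne_top⟩
      have hhalft : a / 2 ≠ ⊤ := (ENNReal.div_lt_top hat (by norm_num)).ne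
      have hsub : ∀ y ∈ B, ENNReal.ofReal lam < maximal f y := by
        intro y hy
        have hball : B ⊆ Metric.ball y (2 * r) := by
          intro z hz
          have h1 : dist z x < r := hz
          have h2 : dist y x < r := hy
          have : dist z y ≤ dist z x + dist x y := dist_triangle _ _ _
          have h3 : dist x y < r := by rwa [dist_comm]
          simp only [Metric.mem_ball]
          linarith
        have hvol : volume (Metric.ball y (2 * r)) = W := by
          show volume (Metric.ball y (2 * r)) = ENNReal.ofReal (2 ^ n) * volume (Metric.ball x r)
          rw [Measure.addHaar_ball_mul_of_pos volume y two_pos r,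
            Measure.addHaar_ball_center volume x r, finrank_euclideanSpace_fin]
        have hle : a ≤ maximal f y := by
          have h1 : a ≤ (volume (Metric.ball y (2 * r)))⁻¹ *
              ∫⁻ z in Metric.ball y (2 * r), ENNReal.ofReal |f z| := by
            rw [hvol]
            calc a = W⁻¹ * I := by rw [ha, div_eq_mul_inv, mul_comm]
              _ ≤ W⁻¹ * ∫⁻ z in Metric.ball y (2 * r), ENNReal.ofReal |f z| :=
                mul_le_mul_right (lintegral_mono_set hball) _
          refine h1.trans ?_
          rw [maximal]
          exact le_iSup₂_of_le (2 * r) (by positivity) le_rfl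
        calc ENNReal.ofReal lam = a / 2 := hofR
          _ < a := ENNReal.half_lt_self ha0 hat
          _ ≤ maximal f y := hle
      have hmono : b.N (B.indicator fun _ => 1) ≤
          b.N ({y | ENNReal.ofReal lam < maximal f y}.indicator fun _ => 1) := by
        apply b.mono
        filter_upwards with z
        by_cases hz : z ∈ B
        · have hz2 : z ∈ {y | ENNReal.ofReal lam < maximal f y} := hsub z hz
          simp [Set.indicator_of_mem, hz, hz2]
        · simp only [Set.indicator_of_notMem hz, abs_zero]
          exact abs_nonneg _
      set K := b.N (B.indicator fun _ => 1) with hK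
      have hKb : K ≤ C * (a / 2)⁻¹ := by
        calc K ≤ C * (ENNReal.ofReal lam)⁻¹ * b.N f := hmono.trans (hCw f lam hlam0)
          _ ≤ C * (ENNReal.ofReal lam)⁻¹ * 1 := mul_le_mul_right hf _
          _ = C * (a / 2)⁻¹ := by rw [mul_one, hofR]
      have haK : a * K ≤ 2 * C := by
        have h1 : a / 2 * K ≤ a / 2 * (C * (a / 2)⁻¹) := mul_le_mul_right hKb _
        have h2 : a / 2 * (C * (a / 2)⁻¹) = C := by
          rw [mul_comm C, ← mul_assoc, ENNReal.mul_inv_cancel hhalf0 hhalft, one_mul]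
        calc a * K = 2 * (a / 2) * K := by
              rw [ENNReal.mul_div_cancel (two_ne_zero) ENNReal.ofNat_ne_top]
          _ = 2 * (a / 2 * K) := by rw [mul_assoc]
          _ ≤ 2 * C := by rw [← h2]; exact mul_le_mul_right h1 _
      calc I * K = a * W * K := by rw [ha, ENNReal.div_mul_cancel hW0 hWt]
        _ = W * (a * K) := by ring
        _ ≤ W * (2 * C) := mul_le_mul_right haK _
        _ = 2 * ENNReal.ofReal (2 ^ n) * C * V := by rw [hWdef]; ring
    have hdual : b.N (B.indicator fun _ => 1) * b.dual (B.indicator fun _ => 1) ≤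
        2 * ENNReal.ofReal (2 ^ n) * C * V := by
      rw [BallBanach.dual, ENNReal.mul_iSup]
      refine iSup_le fun f => ?_
      rw [ENNReal.mul_iSup]
      refine iSup_le fun hf => ?_
      have heq : (∫⁻ z, ENNReal.ofReal |f z * B.indicator (fun _ => 1) z|) =
          ∫⁻ z in B, ENNReal.ofReal |f z| := by
        rw [← lintegral_indicator measurableSet_ball]
        congr 1
        funext z
        by_cases hz : z ∈ B <;> simp [hz, ← hBdef]
      rw [heq, mul_comm]
      exact key f hf
    exact hdual.trans (mul_le_mul_left le_self_add _)
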